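/- Let F be a subset of the vertices of a graph G such that the induced subgraph G[F] has exactly c connected components, and fix a vertex v₁ ∈ F. Then the number of consistent cuts (F¹, F²) of F with v₁ ∈ F¹ equals 2^{c−1}. -/

import Mathlib

open SimpleGraph

/-- If `G[F]` has exactly `c` connected components and `v₁ ∈ F`, then the number of
consistent cuts `(F¹, F²)` of `F` with `v₁ ∈ F¹` equals `2^(c-1)`. -/
theorem stmt5 {V : Type*} [Fintype V] (G : SimpleGraph V) (F : Set V)
    (v₁ : V) (hv₁ : v₁ ∈ F) (c : ℕ)
    (hc : Nat.card (G.induce F).ConnectedComponent = c) :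
    Set.ncard {p : Set V × Set V |
      p.1 ∩ p.2 = ∅ ∧ p.1 ∪ p.2 = F ∧
      (∀ u ∈ p.1, ∀ v ∈ p.2, ¬ G.Adj u v) ∧ v₁ ∈ p.1} = 2 ^ (c - 1) := by
  classical
  set K := (G.induce F).ConnectedComponent with hK
  let comp : F → K := fun w => (G.induce F).connectedComponentMk w
  let c₀ : K := comp ⟨v₁, hv₁⟩
  let f : Set K → Set V × Set V := fun S =>
    ({v | ∃ h : v ∈ F, comp ⟨v, h⟩ ∈ S}, {v | ∃ h : v ∈ F, comp ⟨v, h⟩ ∉ S})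
  have hfinj : Function.Injective f := by
    intro S S' h
    ext k
    obtain ⟨w, rfl⟩ := k.exists_rep
    have h1 := congrArg Prod.fst h
    have : (↑w : V) ∈ (f S).1 ↔ (↑w : V) ∈ (f S').1 := by rw [h1]
    simp [f, comp] at this
    exact this
  -- key constancy lemma
  have const : ∀ (p : Set V × Set V), p.1 ∩ p.2 = ∅ → p.1 ∪ p.2 = F →
      (∀ u ∈ p.1, ∀ v ∈ p.2, ¬ G.Adj u v) →
      ∀ w w' : F, comp w = comp w' → ((↑w : V) ∈ p.1 ↔ (↑w' : V) ∈ p.1) := by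
    intro p hdisj hunion hadj
    have key : ∀ (w w' : F), (G.induce F).Walk w w' → ((↑w : V) ∈ p.1 ↔ (↑w' : V) ∈ p.1) := by
      intro w w' walk
      induction walk with
      | nil => rfl
      | cons h q ih =>
        rename_i a b d
        have hab : G.Adj ↑a ↑b := h
        have step : (↑a : V) ∈ p.1 ↔ (↑b : V) ∈ p.1 := by
          constructor
          · intro ha
            by_contra hb
            have hbF : (↑b : V) ∈ F := b.2
            have : (↑b : V) ∈ p.1 ∪ p.2 := hunion ▸ hbF
            rcases this with h' | h'
            · exact hb h'
            · exact hadj _ ha _ h' hab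
          · intro hb
            by_contra ha
            have haF : (↑a : V) ∈ F := a.2
            have : (↑a : V) ∈ p.1 ∪ p.2 := hunion ▸ haF
            rcases this with h' | h'
            · exact ha h'
            · exact hadj _ hb _ h' hab.symm
        exact step.trans ih
    intro w w' hcc
    obtain ⟨walk⟩ := ConnectedComponent.exact hcc
    exact key w w' walk
  have himg : {p : Set V × Set V |
      p.1 ∩ p.2 = ∅ ∧ p.1 ∪ p.2 = F ∧
      (∀ u ∈ p.1, ∀ v ∈ p.2, ¬ G.Adj u v) ∧ v₁ ∈ p.1} = f '' {S : Set K | c₀ ∈ S} := by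
    ext p
    constructor
    · rintro ⟨hdisj, hunion, hadj, hv⟩
      refine ⟨{k | ∃ w : F, comp w = k ∧ (↑w : V) ∈ p.1}, ⟨⟨v₁, hv₁⟩, rfl, hv⟩, ?_⟩
      have hcst := const p hdisj hunion hadj
      have h1 : (f {k | ∃ w : F, comp w = k ∧ (↑w : V) ∈ p.1}).1 = p.1 := by
        ext x
        simp only [f, Set.mem_setOf_eq]
        constructor
        · rintro ⟨hxF, w, hcw, hw⟩
          exact (hcst w ⟨x, hxF⟩ hcw).mp hw
        · intro hx
          have hxF : x ∈ F := hunion ▸ Set.mem_union_left _ hx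
          exact ⟨hxF, ⟨x, hxF⟩, rfl, hx⟩
      have h2 : (f {k | ∃ w : F, comp w = k ∧ (↑w : V) ∈ p.1}).2 = p.2 := by
        ext x
        simp only [f, Set.mem_setOf_eq]
        constructor
        · rintro ⟨hxF, hnot⟩
          have : x ∈ p.1 ∪ p.2 := hunion ▸ hxF
          rcases this with h' | h'
          · exact absurd ⟨⟨x, hxF⟩, rfl, h'⟩ hnot
          · exact h'
        · intro hx
          have hxF : x ∈ F := hunion ▸ Set.mem_union_right _ hx
          refine ⟨hxF, ?_⟩
          rintro ⟨w, hcw, hw⟩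
          have : x ∈ p.1 := (hcst w ⟨x, hxF⟩ hcw).mp hw
          have : x ∈ p.1 ∩ p.2 := ⟨this, hx⟩
          simp [hdisj] at this
      exact Prod.ext h1 h2
    · rintro ⟨S, hS, rfl⟩
      refine ⟨?_, ?_, ?_, ⟨hv₁, hS⟩⟩
      · ext x
        simp only [f, Set.mem_inter_iff, Set.mem_setOf_eq, Set.mem_empty_iff_false, iff_false]
        rintro ⟨⟨h1, h2⟩, ⟨h3, h4⟩⟩
        exact h4 h2
      · ext x
        simp only [f, Set.mem_union, Set.mem_setOf_eq]
        constructor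
        · rintro (⟨h, _⟩ | ⟨h, _⟩) <;> exact h
        · intro hx
          by_cases hmem : comp ⟨x, hx⟩ ∈ S
          · exact Or.inl ⟨hx, hmem⟩
          · exact Or.inr ⟨hx, hmem⟩
      · rintro u ⟨hu, hcu⟩ v ⟨hvF, hcv⟩ hadj
        have : (G.induce F).Adj ⟨u, hu⟩ ⟨v, hvF⟩ := hadj
        have : comp ⟨u, hu⟩ = comp ⟨v, hvF⟩ := ConnectedComponent.sound this.reachable
        exact hcv (this ▸ hcu)
  rw [himg, Set.ncard_image_of_injective _ hfinj]
  -- now count {S : Set K | c₀ ∈ S}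
  haveI : Finite ↥F := Subtype.finite
  haveI : Finite K := Quot.finite _
  haveI : Fintype K := Fintype.ofFinite K
  rw [← Nat.card_coe_set_eq]
  have e : {S : Set K | c₀ ∈ S} ≃ Set {k : K // k ≠ c₀} := by
    refine ⟨fun S => {k | (↑k : K) ∈ S.1}, fun T => ⟨{k | k = c₀ ∨ ∃ h : k ≠ c₀, ⟨k, h⟩ ∈ T}, Or.inl rfl⟩, ?_, ?_⟩
    · rintro ⟨S, hS⟩
      ext k
      simp only [Set.mem_setOf_eq]
      constructor
      · rintro (rfl | ⟨h, hk⟩)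
        · exact hS
        · exact hk
      · intro hk
        by_cases h : k = c₀
        · exact Or.inl h
        · exact Or.inr ⟨h, hk⟩
    · intro T
      ext k
      simp only [Set.mem_setOf_eq]
      constructor
      · rintro (h | ⟨h, hk⟩)
        · exact absurd h k.2
        · exact hk
      · intro hk
        exact Or.inr ⟨k.2, hk⟩
  rw [Nat.card_congr e]
  have hcard : Nat.card {k : K // k ≠ c₀} = c - 1 := by
    have : Fintype.card {k : K // k ≠ c₀} = Fintype.card K - 1 := by
      simp [Fintype.card_subtype_compl]
    rw [Nat.card_eq_fintype_card, this, ← hc, Nat.card_eq_fintype_card]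
  rw [Nat.card_eq_fintype_card, Fintype.card_set, ← Nat.card_eq_fintype_card, hcard]
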